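/- Let {u_1,…,u_γ} be a minimum {k}-dominating multiset of G and P_1,…,P_γ a k-partition of V(G) with u_i ∈ P_i and P_i ⊆ N[u_i] for all i. Then for every subset I of {1,…,γ}, the multiset A = ⊎_{i∈I}{u_i} dominates C = ⊎_{i∈I}P_i, and moreover any multiset B of vertices dominating C satisfies |B| ≥ |A| = |I|. -/

import Mathlib

open scoped Classical

noncomputable def domCount {V : Type*} (G : SimpleGraph V) (A : Multiset V) (v : V) : ℕ :=
  Multiset.countP (fun a => a = v ∨ G.Adj v a) A

/-- `A` dominates `B`: for every vertex `b`, the number of elements of `A` in the closed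
neighborhood of `b` (with multiplicity) is at least the multiplicity of `b` in `B`. -/
def Dominates {V : Type*} (G : SimpleGraph V) (A B : Multiset V) : Prop :=
  ∀ b, B.count b ≤ domCount G A b

/-- `A` is a `{k}`-dominating multiset of `G`. -/
def KDominating {V : Type*} (G : SimpleGraph V) (k : ℕ) (A : Multiset V) : Prop :=
  ∀ v, k ≤ domCount G A v

/-- the `{k}`-domination number `γ_{k}(G)`. -/
noncomputable def gammaK {V : Type*} (G : SimpleGraph V) (k : ℕ) : ℕ :=
  sInf {n | ∃ D : Multiset V, KDominating G k D ∧ Multiset.card D = n}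

/-- `S` is a dominating set of `G`. -/
def IsDomSet {V : Type*} (G : SimpleGraph V) (S : Finset V) : Prop :=
  ∀ v, ∃ d ∈ S, d = v ∨ G.Adj v d

/-- the domination number `γ(G)`. -/
noncomputable def gamma {V : Type*} (G : SimpleGraph V) : ℕ :=
  sInf {n | ∃ S : Finset V, IsDomSet G S ∧ S.card = n}

/-- the Ψ-projection of a multiset on `V(G) × V(H)` onto `V(H)`: multiplicity at `h` is the
sum over `g` of the multiplicity of `(g,h)`. -/
def psiH {α β : Type*} (A : Multiset (α × β)) : Multiset β := A.map Prod.snd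

lemma aux2 {V ι : Type*} (P : ι → Finset V) (s : Multiset ι) (v : V) :
    Multiset.count v (s.bind fun i => (P i).val) =
      Multiset.countP (fun i => v ∈ P i) s := by
  induction s using Multiset.induction with
  | empty => simp
  | cons a s ih =>
    rw [Multiset.cons_bind, Multiset.count_add, Multiset.countP_cons, ih]
    by_cases h : v ∈ P a
    · simp [h, Multiset.count_eq_one_of_mem (P a).nodup h, Nat.add_comm]
    · simp [h, Multiset.count_eq_zero_of_notMem (by exact h)]

lemma aux1 {V ι : Type*} (G : SimpleGraph V) (u : ι → V) (P : ι → Finset V)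
    (hPN : ∀ i, ∀ v ∈ P i, v = u i ∨ G.Adj (u i) v) (s : Multiset ι) (v : V) :
    Multiset.countP (fun i => v ∈ P i) s ≤ domCount G (s.map u) v := by
  unfold domCount
  rw [Multiset.countP_map, Multiset.countP_eq_card_filter]
  apply Multiset.card_le_card
  apply Multiset.monotone_filter_right
  intro i hi
  rcases hPN i v hi with h | h
  · exact Or.inl h.symm
  · exact Or.inr h.symm

theorem stmt5 {V : Type*} [Fintype V] (G : SimpleGraph V) (k : ℕ) (hk : 1 ≤ k)
    (u : Fin (gammaK G k) → V)
    (hu : KDominating G k (↑(List.ofFn u) : Multiset V))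
    (P : Fin (gammaK G k) → Finset V)
    (hpart : ∀ v : V, (Finset.univ.filter fun i => v ∈ P i).card = k)
    (huP : ∀ i, u i ∈ P i)
    (hPN : ∀ i, ∀ v ∈ P i, v = u i ∨ G.Adj (u i) v)
    (I : Finset (Fin (gammaK G k))) :
    Dominates G (I.val.map u) (I.val.bind fun i => (P i).val) ∧
      (∀ B : Multiset V, Dominates G B (I.val.bind fun i => (P i).val) →
        Multiset.card (I.val.map u) ≤ Multiset.card B) ∧
      Multiset.card (I.val.map u) = I.card := by
  refine ⟨?_, ?_, by rw [Multiset.card_map]; rfl⟩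
  · intro b
    rw [aux2]
    exact aux1 G u P hPN I.val b
  · intro B hB
    simp only [Multiset.card_map]
    -- D := B + (Iᶜ).val.map u is k-dominating
    set D : Multiset V := B + (Iᶜ : Finset _).val.map u with hD
    have hKD : KDominating G k D := by
      intro v
      have hsplit : ((Iᶜ : Finset _).filter fun i => v ∈ P i).card
          + (I.filter fun i => v ∈ P i).card = k := by
        have hU : (Iᶜ : Finset _).filter (fun i => v ∈ P i) ∪ I.filter (fun i => v ∈ P i)
            = Finset.univ.filter (fun i => v ∈ P i) := by
          rw [← Finset.filter_union]
          congr 1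
          exact compl_sup_eq_top
        rw [← Finset.card_union_of_disjoint
          (Finset.disjoint_filter_filter disjoint_compl_left), hU, hpart v]
      have h1 : ((Iᶜ : Finset _).filter fun i => v ∈ P i).card
          ≤ domCount G ((Iᶜ : Finset _).val.map u) v := by
        have := aux1 G u P hPN (Iᶜ : Finset _).val v
        rw [Multiset.countP_eq_card_filter] at this
        exact this
      have h2 : (I.filter fun i => v ∈ P i).card ≤ domCount G B v := by
        have := hB v
        rw [aux2, Multiset.countP_eq_card_filter] at this
        exact this
      have hadd : domCount G D v = domCount G B v + domCount G ((Iᶜ : Finset _).val.map u) v := by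
        simp [hD, domCount, Multiset.countP_add]
      omega
    have hγ : gammaK G k ≤ Multiset.card D :=
      Nat.sInf_le ⟨D, hKD, rfl⟩
    have hcardD : Multiset.card D = Multiset.card B + (Iᶜ : Finset _).card := by
      rw [hD, Multiset.card_add, Multiset.card_map]; rfl
    rw [Finset.card_compl, Fintype.card_fin] at hcardD
    have hIle : I.card ≤ gammaK G k := by
      have := Finset.card_le_univ I
      simpa using this
    have hIv : Multiset.card I.val = I.card := rfl
    omega
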